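/- Let T : I → I be an n-IET, I' ⊂ I an admissible interval satisfying (H3) (the exhaustivity length condition), and T' the Poincaré (first-return) map of T on I'. If T' is topologically transitive (has a dense orbit in I'), then T is topologically transitive. -/

import Mathlib

lemma iter_peel (a : ℝ) (T : ℝ → ℝ) (hinj : Set.InjOn T (Set.Icc 0 a \ {0})) :
    ∀ p q u v, p ≤ q → (∀ k < p, T^[k] u ∈ Set.Icc 0 a \ {0}) →
      (∀ k, q - p ≤ k → k < q → T^[k] v ∈ Set.Icc 0 a \ {0}) →
      T^[p] u = T^[q] v → u = T^[q - p] v := by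
  intro p
  induction p with
  | zero => intro q u v _ _ _ h; simpa using h
  | succ p ih =>
    intro q u v hpq hu hv h
    obtain ⟨q', rfl⟩ : ∃ q', q = q' + 1 := ⟨q - 1, by omega⟩
    rw [Function.iterate_succ_apply' T p u, Function.iterate_succ_apply' T q' v] at h
    have h1 : T^[p] u = T^[q'] v := by
      apply hinj (hu p (Nat.lt_succ_self p)) (hv q' (by omega) (by omega)) h
    have h2 := ih q' u v (by omega) (fun k hk => hu k (by omega))
      (fun k h1 h2 => hv k (by omega) (by omega)) h1
    rw [h2]; congr 1; omega

lemma exists_piece (n : ℕ) (x : Fin (n + 1) → ℝ) (v : ℝ)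
    (h0 : x 0 ≤ v) (h1 : v ≤ x (Fin.last n)) (hne : ∀ m, v ≠ x m) :
    ∃ m : Fin n, x m.castSucc < v ∧ v < x m.succ := by
  classical
  let s : Finset (Fin (n + 1)) := Finset.univ.filter (fun m => x m < v)
  have hs : s.Nonempty := ⟨0, by
    simp only [s, Finset.mem_filter, Finset.mem_univ, true_and]
    exact lt_of_le_of_ne h0 (Ne.symm (hne 0))⟩
  let m0 := s.max' hs
  have hm0 : x m0 < v := by have := s.max'_mem hs; simpa [s] using this
  have hm0last : m0 ≠ Fin.last n := by
    intro h
    rw [h] at hm0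
    exact absurd h1 (not_le.mpr hm0)
  obtain ⟨m, hmeq⟩ := Fin.exists_castSucc_eq.mpr hm0last
  refine ⟨m, by rw [hmeq]; exact hm0, ?_⟩
  have hnot : m.succ ∉ s := by
    intro hmem
    have hle : m.succ ≤ m0 := s.le_max' _ hmem
    rw [← hmeq] at hle
    exact absurd (lt_of_lt_of_le (Fin.castSucc_lt_succ : m.castSucc < m.succ) hle) (lt_irrefl _)
  have hnlt : ¬ x m.succ < v := by simpa [s] using hnot
  exact lt_of_le_of_ne (not_lt.mp hnlt) (hne _)

lemma affine_image (ε b c d : ℝ) (hε : ε = 1 ∨ ε = -1) :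
    ∃ lo hi : ℝ, hi - lo = d - c ∧ (fun y => ε * y + b) '' Set.Ioo c d = Set.Ioo lo hi := by
  rcases hε with h | h
  · refine ⟨c + b, d + b, by ring, ?_⟩
    subst h
    have : (fun y => (1:ℝ) * y + b) = (· + b) := by funext y; ring
    rw [this, Set.image_add_const_Ioo]
  · refine ⟨b - d, b - c, by ring, ?_⟩
    subst h
    have : (fun y => (-1:ℝ) * y + b) = (fun y => b - y) := by funext y; ring
    rw [this, Set.image_const_sub_Ioo]

/-- If the Poincaré (first-return) map of an IET on an admissible interval
satisfying the exhaustivity condition (H3) is topologically transitive, then so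
is the IET itself. -/
theorem transitivity_lifts_from_return_map
    (a a' : ℝ) (ha' : 0 < a') (haa : a' < a) (n : ℕ) (hn : 0 < n)
    -- T is an n-IET on I = [0,a]
    (x : Fin (n + 1) → ℝ) (hmono : StrictMono x)
    (hx0 : x 0 = 0) (hxn : x (Fin.last n) = a)
    (T : ℝ → ℝ)
    (hmaps : Set.MapsTo T (Set.Icc 0 a) (Set.Icc 0 a))
    (hinj : Set.InjOn T (Set.Icc 0 a \ {0}))
    (hiso : ∀ i : Fin n, ∃ ε : ℝ, (ε = 1 ∨ ε = -1) ∧ ∃ b : ℝ,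
      ∀ y ∈ Set.Ioo (x i.castSucc) (x i.succ), T y = ε * y + b)
    (D : Set ℝ) (hD : D = {y | ∃ i : Fin (n + 1), i ≠ 0 ∧ i ≠ Fin.last n ∧ y = x i})
    -- first-return time N to I' = [0,a']
    (N : ℝ → ℕ)
    (hN : ∀ y ∈ Set.Icc 0 a', 1 ≤ N y ∧ T^[N y] y ∈ Set.Icc 0 a' ∧
      ∀ k, 1 ≤ k → k < N y → T^[k] y ∉ Set.Icc 0 a')
    -- admissibility: a partition of I' whose pre-return iterates form B
    (x' : Fin (n + 1) → ℝ) (hmono' : StrictMono x')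
    (hx'0 : x' 0 = 0) (hx'n : x' (Fin.last n) = a')
    (B : Set ℝ)
    (hB : B = {y | ∃ i : Fin (n + 1), i ≠ 0 ∧ ∃ k < N (x' i), y = T^[k] (x' i)})
    (hB1 : D ⊆ B) (hB2 : a' ∈ T '' B)
    -- constant return times on the partition intervals, and (H3)
    (r : Fin n → ℕ)
    (hret : ∀ i : Fin n, ∀ y ∈ Set.Ioo (x' i.castSucc) (x' i.succ), N y = r i)
    (hH3 : ∑ i, (r i : ℝ) * (x' i.succ - x' i.castSucc) = a)
    -- the Poincaré map T'
    (T' : ℝ → ℝ) (hT' : ∀ y ∈ Set.Icc 0 a', T' y = T^[N y] y)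
    -- T' is topologically transitive on I'
    (htrans : ∃ z ∈ Set.Icc (0:ℝ) a',
      Set.Icc (0:ℝ) a' ⊆ closure {w | ∃ k : ℕ, T'^[k] z = w}) :
    -- then T is topologically transitive on I
    ∃ z ∈ Set.Icc (0:ℝ) a,
      Set.Icc (0:ℝ) a ⊆ closure {w | ∃ k : ℕ, T^[k] z = w} := by
  classical
  obtain ⟨z, hz, hdense⟩ := htrans
  have ha : (0:ℝ) < a := lt_trans ha' haa
  have hsub' : Set.Icc (0:ℝ) a' ⊆ Set.Icc 0 a := Set.Icc_subset_Icc le_rfl haa.le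
  set c : Fin n → ℝ := fun i => x' i.castSucc with hcdef
  set d : Fin n → ℝ := fun i => x' i.succ with hddef
  have hcd : ∀ i, c i < d i := fun i => hmono' (Fin.castSucc_lt_succ : i.castSucc < i.succ)
  have hc0 : ∀ i, (0:ℝ) ≤ c i := fun i => by
    rw [hcdef, ← hx'0]; exact hmono'.monotone (Fin.zero_le _)
  have hda : ∀ i, d i ≤ a' := fun i => by
    rw [hddef, ← hx'n]; exact hmono'.monotone (Fin.le_last _)
  have hJsub : ∀ i, Set.Ioo (c i) (d i) ⊆ Set.Icc 0 a' := fun i y hy =>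
    ⟨le_trans (hc0 i) hy.1.le, le_trans hy.2.le (hda i)⟩
  have hiter : ∀ y ∈ Set.Icc (0:ℝ) a, ∀ k, T^[k] y ∈ Set.Icc 0 a :=
    fun y hy k => hmaps.iterate k hy
  -- iterates before return are in [0,a] and nonzero
  have hnz : ∀ i : Fin n, ∀ y ∈ Set.Ioo (c i) (d i), ∀ k < r i,
      T^[k] y ∈ Set.Icc 0 a \ {0} := by
    intro i y hy k hk
    have hy' : y ∈ Set.Icc 0 a' := hJsub i hy
    refine ⟨hiter y (hsub' hy') k, ?_⟩
    intro h0
    rw [Set.mem_singleton_iff] at h0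
    rcases Nat.eq_zero_or_pos k with h | h
    · rw [h, Function.iterate_zero_apply] at h0
      exact absurd h0 (ne_of_gt (lt_of_le_of_lt (hc0 i) hy.1))
    · exact (hN y hy').2.2 k h (by rw [hret i y hy]; exact hk)
        (by rw [h0]; exact ⟨le_rfl, ha'.le⟩)
  have hnzx : ∀ m : Fin (n+1), m ≠ 0 → x' m ∈ Set.Icc (0:ℝ) a' ∧
      ∀ l < N (x' m), T^[l] (x' m) ∈ Set.Icc 0 a \ {0} := by
    intro m hm
    have hpos : 0 < x' m := by rw [← hx'0]; exact hmono' (Fin.pos_of_ne_zero hm)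
    have hle : x' m ≤ a' := by rw [← hx'n]; exact hmono'.monotone (Fin.le_last m)
    have hmem : x' m ∈ Set.Icc (0:ℝ) a' := ⟨hpos.le, hle⟩
    refine ⟨hmem, fun l hl => ⟨hiter _ (hsub' hmem) l, ?_⟩⟩
    intro h0
    rw [Set.mem_singleton_iff] at h0
    rcases Nat.eq_zero_or_pos l with h | h
    · rw [h, Function.iterate_zero_apply] at h0
      exact absurd h0 (ne_of_gt hpos)
    · exact (hN _ hmem).2.2 l h hl (by rw [h0]; exact ⟨le_rfl, ha'.le⟩)
  -- x' m is never inside an open partition interval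
  have hx'notin : ∀ i : Fin n, ∀ m : Fin (n+1), x' m ∉ Set.Ioo (c i) (d i) := by
    intro i m hmem
    have h1 : i.castSucc < m := hmono'.lt_iff_lt.mp hmem.1
    have h2 : m < i.succ := hmono'.lt_iff_lt.mp hmem.2
    rw [Fin.castSucc_lt_iff_succ_le] at h1
    exact absurd h2 (not_lt.mpr h1)
  -- iterates before return avoid B
  have havoid : ∀ i : Fin n, ∀ y ∈ Set.Ioo (c i) (d i), ∀ k < r i,
      ∀ m : Fin (n+1), m ≠ 0 → ∀ l < N (x' m), T^[k] y ≠ T^[l] (x' m) := by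
    intro i y hy k hk m hm l hl heq
    have hy' : y ∈ Set.Icc 0 a' := hJsub i hy
    obtain ⟨hxmem, hxnz⟩ := hnzx m hm
    rcases le_or_gt k l with hkl | hlk
    · have hpeel := iter_peel a T hinj k l y (x' m) hkl
        (fun kk hkk => hnz i y hy kk (lt_trans hkk hk))
        (fun kk _ hkk => hxnz kk (lt_trans hkk hl)) heq
      rcases Nat.eq_zero_or_pos (l - k) with h | h
      · rw [h, Function.iterate_zero_apply] at hpeel
        exact hx'notin i m (hpeel ▸ hy)
      · exact (hN _ hxmem).2.2 (l - k) h (by omega) (by rw [← hpeel]; exact hy')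
    · have hpeel := iter_peel a T hinj l k (x' m) y hlk.le
        (fun kk hkk => hxnz kk (lt_trans hkk hl))
        (fun kk _ hkk => hnz i y hy kk (lt_trans hkk hk)) heq.symm
      exact (hN y hy').2.2 (k - l) (by omega) (by rw [hret i y hy]; omega)
        (by rw [← hpeel]; exact hxmem)
  -- the key affine structure of iterates before return
  have hkey : ∀ i : Fin n, ∀ j, j < r i → ∃ ε b : ℝ, (ε = 1 ∨ ε = -1) ∧
      ∀ y ∈ Set.Ioo (c i) (d i), T^[j] y = ε * y + b := by
    intro i j
    induction j with
    | zero => exact fun _ => ⟨1, 0, Or.inl rfl, fun y _ => by simp⟩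
    | succ j ih =>
      intro hj
      obtain ⟨ε, b, hε, hfun⟩ := ih (by omega)
      obtain ⟨lo, hi, hlen, himg⟩ := affine_image ε b (c i) (d i) hε
      have himgmem : ∀ y ∈ Set.Ioo (c i) (d i), T^[j] y ∈ Set.Ioo lo hi := by
        intro y hy
        rw [hfun y hy, ← himg]
        exact Set.mem_image_of_mem _ hy
      have hnex : ∀ m : Fin (n + 1), ∀ y ∈ Set.Ioo (c i) (d i), T^[j] y ≠ x m := by
        intro m y hy hTy
        by_cases hm0 : m = 0
        · exact (hnz i y hy j (by omega)).2
            (by rw [Set.mem_singleton_iff, hTy, hm0, hx0])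
        by_cases hml : m = Fin.last n
        · -- T^[j] y = a, contradiction by moving inside the interval
          rw [hml, hxn] at hTy
          rcases hε with h1 | h1
          · set y2 := (y + d i) / 2 with hy2
            have hy2mem : y2 ∈ Set.Ioo (c i) (d i) := by
              rw [Set.mem_Ioo, hy2]
              constructor
              · linarith [hy.1, hy.2]
              · linarith [hy.2]
            have e1 : T^[j] y2 = y2 + b := by rw [hfun y2 hy2mem, h1]; ring
            have e2 : y + b = a := by rw [← hTy, hfun y hy, h1]; ring
            have e3 : T^[j] y2 ≤ a := (hiter y2 (hsub' (hJsub i hy2mem)) j).2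
            have : y2 ≤ y := by linarith
            have : y < y2 := by rw [hy2]; linarith [hy.2]
            linarith
          · set y2 := (c i + y) / 2 with hy2
            have hy2mem : y2 ∈ Set.Ioo (c i) (d i) := by
              rw [Set.mem_Ioo, hy2]
              constructor
              · linarith [hy.1]
              · linarith [hy.1, hy.2]
            have e1 : T^[j] y2 = -y2 + b := by rw [hfun y2 hy2mem, h1]; ring
            have e2 : -y + b = a := by rw [← hTy, hfun y hy, h1]; ring
            have e3 : T^[j] y2 ≤ a := (hiter y2 (hsub' (hJsub i hy2mem)) j).2
            have : y2 < y := by rw [hy2]; linarith [hy.1]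
            linarith
        · -- interior breakpoint: element of D ⊆ B
          have hxD : x m ∈ D := by rw [hD]; exact ⟨m, hm0, hml, rfl⟩
          have hxB := hB1 hxD
          rw [hB] at hxB
          obtain ⟨m', hm', l, hl, hxeq⟩ := hxB
          exact havoid i y hy j (by omega) m' hm' l hl (by rw [hTy, hxeq])
      have hy0 : (c i + d i) / 2 ∈ Set.Ioo (c i) (d i) :=
        ⟨by linarith [hcd i], by linarith [hcd i]⟩
      have hv := himgmem _ hy0
      have hvIcc : T^[j] ((c i + d i) / 2) ∈ Set.Icc 0 a :=
        hiter _ (hsub' (hJsub i hy0)) j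
      obtain ⟨m, hm1, hm2⟩ := exists_piece n x (T^[j] ((c i + d i) / 2))
        (by rw [hx0]; exact hvIcc.1) (by rw [hxn]; exact hvIcc.2)
        (fun m => hnex m _ hy0)
      -- the whole image interval lies in the piece m
      have hlo : x m.castSucc ≤ lo := by
        by_contra h
        push_neg at h
        have hmem : x m.castSucc ∈ Set.Ioo lo hi := ⟨h, lt_trans hm1 hv.2⟩
        rw [← himg] at hmem
        obtain ⟨y2, hy2, hy2eq⟩ := hmem
        exact hnex m.castSucc y2 hy2 (by rw [hfun y2 hy2]; exact hy2eq)
      have hhi : hi ≤ x m.succ := by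
        by_contra h
        push_neg at h
        have hmem : x m.succ ∈ Set.Ioo lo hi := ⟨lt_trans hv.1 hm2, h⟩
        rw [← himg] at hmem
        obtain ⟨y2, hy2, hy2eq⟩ := hmem
        exact hnex m.succ y2 hy2 (by rw [hfun y2 hy2]; exact hy2eq)
      obtain ⟨ε', hε', b', hab⟩ := hiso m
      refine ⟨ε' * ε, ε' * b + b', ?_, ?_⟩
      · rcases hε with h1 | h1 <;> rcases hε' with h2 | h2 <;>
          simp [h1, h2] <;> norm_num
      · intro y hy
        have h1 : T^[j] y ∈ Set.Ioo (x m.castSucc) (x m.succ) :=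
          ⟨lt_of_le_of_lt hlo (himgmem y hy).1, lt_of_lt_of_le (himgmem y hy).2 hhi⟩
        rw [Function.iterate_succ_apply', hab _ h1, hfun y hy]; ring
  -- the T'-orbit of z consists of T-orbit points
  have horbit : ∀ k : ℕ, ∃ m : ℕ, T'^[k] z = T^[m] z ∧ T'^[k] z ∈ Set.Icc 0 a' := by
    intro k
    induction k with
    | zero => exact ⟨0, rfl, hz⟩
    | succ k ih =>
      obtain ⟨m, hm, hmem⟩ := ih
      refine ⟨N (T'^[k] z) + m, ?_, ?_⟩
      · rw [Function.iterate_succ_apply', hT' _ hmem, Function.iterate_add_apply, ← hm]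
      · rw [Function.iterate_succ_apply', hT' _ hmem]
        exact (hN _ hmem).2.1
  -- return times are ≥ 1
  have hr1 : ∀ i : Fin n, 1 ≤ r i := by
    intro i
    have hy0 : (c i + d i) / 2 ∈ Set.Ioo (c i) (d i) :=
      ⟨by linarith [hcd i], by linarith [hcd i]⟩
    rw [← hret i _ hy0]
    exact (hN _ (hJsub i hy0)).1
  -- the towers
  have hKIoo : ∀ i : Fin n, ∀ j < r i, ∃ lo hi : ℝ, hi - lo = d i - c i ∧
      T^[j] '' Set.Ioo (c i) (d i) = Set.Ioo lo hi := by
    intro i j hj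
    obtain ⟨ε, b, hε, hfun⟩ := hkey i j hj
    obtain ⟨lo, hi, hlen, himg⟩ := affine_image ε b (c i) (d i) hε
    exact ⟨lo, hi, hlen, by rw [← himg]; exact Set.image_congr hfun⟩
  -- disjointness of the towers
  have hdisjaux : ∀ (i : Fin n) (j : ℕ) (i₂ : Fin n) (j₂ : ℕ), j < r i → j₂ < r i₂ →
      j ≤ j₂ → (i, j) ≠ (i₂, j₂) → ∀ w, w ∈ T^[j] '' Set.Ioo (c i) (d i) →
      w ∈ T^[j₂] '' Set.Ioo (c i₂) (d i₂) → False := by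
    intro i j i₂ j₂ hj hj₂ hle hne w ⟨y, hy, hyw⟩ ⟨y₂, hy₂, hy₂w⟩
    have heq : T^[j] y = T^[j₂] y₂ := by rw [hyw, hy₂w]
    have hpeel := iter_peel a T hinj j j₂ y y₂ hle
      (fun kk hkk => hnz i y hy kk (lt_trans hkk hj))
      (fun kk _ hkk => hnz i₂ y₂ hy₂ kk (lt_trans hkk hj₂)) heq
    rcases Nat.eq_zero_or_pos (j₂ - j) with h | h
    · rw [h, Function.iterate_zero_apply] at hpeel
      have hjj : j = j₂ := by omega
      have hii : i ≠ i₂ := fun h' => hne (by rw [h', hjj])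
      rcases lt_or_gt_of_ne hii with h' | h'
      · have hle2 : d i ≤ c i₂ := hmono'.monotone (Fin.succ_le_castSucc_iff.mpr h')
        rw [hpeel] at hy
        linarith [hy.2, hy₂.1]
      · have hle2 : d i₂ ≤ c i := hmono'.monotone (Fin.succ_le_castSucc_iff.mpr h')
        rw [hpeel] at hy
        linarith [hy.1, hy₂.2]
    · exact (hN y₂ (hJsub i₂ hy₂)).2.2 (j₂ - j) h
        (by rw [hret i₂ y₂ hy₂]; omega) (by rw [← hpeel]; exact hJsub i hy)
  -- the big union
  set s : Finset (Fin n × ℕ) :=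
    (Finset.univ ×ˢ Finset.range (Finset.univ.sup r)).filter (fun p => p.2 < r p.1)
    with hsdef
  set K : Fin n × ℕ → Set ℝ := fun p => T^[p.2] '' Set.Ioo (c p.1) (d p.1) with hKdef
  have hmem_s : ∀ p : Fin n × ℕ, p ∈ s ↔ p.2 < r p.1 := by
    intro p
    rw [hsdef]
    simp only [Finset.mem_filter, Finset.mem_product, Finset.mem_univ, true_and,
      Finset.mem_range, and_iff_right_iff_imp]
    intro h
    exact lt_of_lt_of_le h (Finset.le_sup (Finset.mem_univ p.1))
  set U : Set ℝ := ⋃ p ∈ s, K p with hUdef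
  have hUsub : U ⊆ Set.Icc 0 a := by
    rw [hUdef]
    refine Set.iUnion₂_subset fun p hp => ?_
    rintro w ⟨y, hy, rfl⟩
    exact hiter y (hsub' (hJsub p.1 hy)) p.2
  have hvolK : ∀ p ∈ s, MeasureTheory.volume (K p) = ENNReal.ofReal (d p.1 - c p.1) := by
    intro p hp
    obtain ⟨lo, hi, hlen, himg⟩ := hKIoo p.1 p.2 ((hmem_s p).mp hp)
    show MeasureTheory.volume (T^[p.2] '' Set.Ioo (c p.1) (d p.1)) = _
    rw [himg, Real.volume_Ioo, hlen]
  have hmeasK : ∀ p ∈ s, MeasurableSet (K p) := by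
    intro p hp
    obtain ⟨lo, hi, _, himg⟩ := hKIoo p.1 p.2 ((hmem_s p).mp hp)
    show MeasurableSet (T^[p.2] '' Set.Ioo (c p.1) (d p.1))
    rw [himg]
    exact measurableSet_Ioo
  have hdisj : (s : Set (Fin n × ℕ)).PairwiseDisjoint K := by
    intro p hp q hq hpq
    rw [Finset.mem_coe, hmem_s] at hp hq
    rw [Function.onFun, Set.disjoint_left]
    intro w hw hw'
    rcases le_or_gt p.2 q.2 with h | h
    · exact hdisjaux p.1 p.2 q.1 q.2 hp hq h (by simpa [Prod.ext_iff] using hpq) w hw hw'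
    · exact hdisjaux q.1 q.2 p.1 p.2 hq hp h.le
        (by simp [Prod.ext_iff] at hpq ⊢; tauto) w hw' hw
  have hUvol : MeasureTheory.volume U = ENNReal.ofReal a := by
    rw [hUdef, MeasureTheory.measure_biUnion_finset hdisj hmeasK]
    rw [Finset.sum_congr rfl hvolK]
    have hsum : ∑ p ∈ s, ENNReal.ofReal (d p.1 - c p.1)
        = ∑ i : Fin n, (r i : ENNReal) * ENNReal.ofReal (d i - c i) := by
      rw [hsdef, Finset.sum_filter, Finset.sum_product]
      refine Finset.sum_congr rfl fun i _ => ?_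
      rw [← Finset.sum_filter]
      have hflt : (Finset.range (Finset.univ.sup r)).filter (fun j => j < r i)
          = Finset.range (r i) := by
        ext j
        simp only [Finset.mem_filter, Finset.mem_range]
        have := Finset.le_sup (f := r) (Finset.mem_univ i)
        omega
      rw [hflt]
      calc ∑ p ∈ Finset.range (r i), ENNReal.ofReal (d ((i, p) : Fin n × ℕ).1 - c ((i, p) : Fin n × ℕ).1)
          = ∑ _p ∈ Finset.range (r i), ENNReal.ofReal (d i - c i) := rfl
        _ = (r i : ENNReal) * ENNReal.ofReal (d i - c i) := by
            rw [Finset.sum_const, Finset.card_range, nsmul_eq_mul]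
    rw [hsum, ← hH3]
    rw [ENNReal.ofReal_sum_of_nonneg
      (fun i _ => mul_nonneg (Nat.cast_nonneg _) (by linarith [hcd i]))]
    refine Finset.sum_congr rfl fun i _ => ?_
    rw [ENNReal.ofReal_mul (Nat.cast_nonneg _), ENNReal.ofReal_natCast]
  -- the complement of U in [0,a] is null
  have hUmeas : MeasurableSet U := by
    rw [hUdef]
    exact Finset.measurableSet_biUnion s hmeasK
  have hnull : MeasureTheory.volume (Set.Icc 0 a \ U) = 0 := by
    rw [MeasureTheory.measure_diff hUsub hUmeas.nullMeasurableSet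
      (by rw [hUvol]; exact ENNReal.ofReal_ne_top)]
    rw [hUvol, Real.volume_Icc]
    simp
  -- U is dense in [0, a]
  have hUdense : ∀ w ∈ Set.Icc (0:ℝ) a, ∀ ε > (0:ℝ), ∃ u ∈ U, |w - u| < ε := by
    intro w hw ε hε
    by_contra hcon
    push_neg at hcon
    set lo := max (w - ε) 0 with hlo
    set hi := min (w + ε) a with hhi
    have hlohi : lo < hi := by
      rw [hlo, hhi]
      rcases hw with ⟨hw1, hw2⟩
      rcases max_cases (w - ε) 0 with ⟨h1, h2⟩ | ⟨h1, h2⟩ <;>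
        rcases min_cases (w + ε) a with ⟨h3, h4⟩ | ⟨h3, h4⟩ <;> rw [h1, h3] <;> linarith
    have hVsub : Set.Ioo lo hi ⊆ Set.Icc 0 a \ U := by
      intro u hu
      refine ⟨⟨le_trans (le_max_right _ _) hu.1.le, le_trans hu.2.le (min_le_right _ _)⟩, ?_⟩
      intro huU
      refine absurd (hcon u huU) (not_le.mpr ?_)
      rw [abs_sub_lt_iff]
      constructor
      · have := lt_of_le_of_lt (le_max_left (w - ε) 0) hu.1
        linarith
      · have := lt_of_lt_of_le hu.2 (min_le_left (w + ε) a)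
        linarith
    have := MeasureTheory.measure_mono (μ := MeasureTheory.volume) hVsub
    rw [hnull] at this
    rw [le_zero_iff, Real.volume_Ioo] at this
    rw [ENNReal.ofReal_eq_zero] at this
    linarith
  -- conclusion
  refine ⟨z, hsub' hz, ?_⟩
  intro w hw
  rw [Metric.mem_closure_iff]
  intro ε hε
  obtain ⟨u, huU, hwu⟩ := hUdense w hw (ε / 2) (by linarith)
  rw [hUdef, Set.mem_iUnion₂] at huU
  obtain ⟨p, hp, hpu⟩ := huU
  rw [hmem_s] at hp
  obtain ⟨i, j⟩ := p
  obtain ⟨y, hy, hyu⟩ := hpu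
  simp only at hp hy hyu
  obtain ⟨εi, bi, hεi, hfun⟩ := hkey i j hp
  have hyc : y ∈ closure {w | ∃ k, T'^[k] z = w} := hdense (hJsub i hy)
  rw [Metric.mem_closure_iff] at hyc
  have hδpos : (0:ℝ) < min (ε / 2) (min (y - c i) (d i - y)) := by
    refine lt_min (by linarith) (lt_min ?_ ?_) <;> [linarith [hy.1]; linarith [hy.2]]
  obtain ⟨q, hq, hyq⟩ := hyc _ hδpos
  obtain ⟨k, hk⟩ := hq
  obtain ⟨m, hm, _⟩ := horbit k
  have hqz : q = T^[m] z := by rw [← hk, hm]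
  rw [Real.dist_eq] at hyq
  have hyq2 : |y - q| < ε / 2 := lt_of_lt_of_le hyq (min_le_left _ _)
  have hqJ : q ∈ Set.Ioo (c i) (d i) := by
    have h1 : |y - q| < y - c i :=
      lt_of_lt_of_le hyq (le_trans (min_le_right _ _) (min_le_left _ _))
    have h2 : |y - q| < d i - y :=
      lt_of_lt_of_le hyq (le_trans (min_le_right _ _) (min_le_right _ _))
    rw [abs_sub_lt_iff] at h1 h2
    exact ⟨by linarith [h1.1], by linarith [h2.2]⟩
  refine ⟨T^[j + m] z, ⟨j + m, rfl⟩, ?_⟩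
  have hTq : T^[j + m] z = T^[j] q := by
    rw [Function.iterate_add_apply, ← hqz]
  have hclose : |T^[j] y - T^[j] q| < ε / 2 := by
    rw [hfun y hy, hfun q hqJ]
    have : εi * y + bi - (εi * q + bi) = εi * (y - q) := by ring
    rw [this, abs_mul]
    rcases hεi with h | h <;> rw [h] <;> simpa using hyq2
  rw [Real.dist_eq, hTq]
  calc |w - T^[j] q| ≤ |w - u| + |u - T^[j] q| := abs_sub_le _ _ _
    _ < ε / 2 + ε / 2 := by
        refine add_lt_add hwu ?_
        rw [← hyu]
        exact hclose
    _ = ε := by ring
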